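/- Let R be a commutative ring, and consider A = R[t², t³] ⊆ R[t]. Then the quotient R-module R[t]/A is free of rank 1, generated by the class of t. -/
import Mathlib
set_option maxHeartbeats 1000000

open Polynomial

lemma Xpow_mem (R : Type) [CommRing R] : ∀ n : ℕ, n ≠ 1 →
    (X ^ n : R[X]) ∈ Algebra.adjoin R {(X:R[X]) ^ 2, X ^ 3} := by
  intro n
  induction n using Nat.strong_induction_on with
  | _ n ih =>
    intro hn
    match n with
    | 0 => simpa using Subalgebra.one_mem _
    | 2 => exact Algebra.subset_adjoin (by simp)
    | 3 => exact Algebra.subset_adjoin (by simp)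
    | (m+4) =>
      have : (X:R[X]) ^ (m+4) = X ^ 2 * X ^ (m+2) := by ring
      rw [this]
      exact Subalgebra.mul_mem _ (Algebra.subset_adjoin (by simp))
        (ih (m+2) (by omega) (by omega))

lemma mem_iff (R : Type) [CommRing R] (p : R[X]) :
    p ∈ Algebra.adjoin R {(X:R[X]) ^ 2, X ^ 3} ↔ p.coeff 1 = 0 := by
  constructor
  · intro hp
    induction hp using Algebra.adjoin_induction with
    | mem x hx => rcases hx with h | h <;> subst h <;> simp
    | algebraMap r => simp [coeff_one]
    | add x y _ _ hx hy => simp [hx, hy]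
    | mul x y _ _ hx hy => simp [coeff_mul, Finset.Nat.sum_antidiagonal_eq_sum_range_succ_mk,
        Finset.sum_range_succ, hx, hy]
  · intro hp
    rw [p.as_sum_support]
    apply Subalgebra.sum_mem
    intro n hn
    rw [← C_mul_X_pow_eq_monomial]
    rcases eq_or_ne n 1 with rfl | h
    · simp only [hp, map_zero, zero_mul]; exact Subalgebra.zero_mem _
    · exact Subalgebra.mul_mem _ (Subalgebra.algebraMap_mem _ _) (Xpow_mem R n h)

/-- Let `R` be a commutative ring and `A = R[t²,t³] ⊆ R[t]`.  Then the quotient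
`R`-module `R[t]/A` is free of rank one, generated by the class of `t`:
the map `R → R[t]/A`, `r ↦ r·[t]`, is bijective. -/
theorem quotient_by_cusp_subalgebra_free_rank_one
    (R : Type) [CommRing R] :
    Function.Bijective (fun r : R =>
      r • (Submodule.Quotient.mk (p := Subalgebra.toSubmodule
        (Algebra.adjoin R {Polynomial.X ^ 2, Polynomial.X ^ 3}))
        (Polynomial.X : Polynomial R))) := by
  set A := Subalgebra.toSubmodule (Algebra.adjoin R {(X:R[X]) ^ 2, X ^ 3}) with hA
  have key : ∀ (r : R) (p : R[X]),
      (r • (Submodule.Quotient.mk (p := A) (X : R[X])) =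
        Submodule.Quotient.mk p) ↔ (r • X - p).coeff 1 = 0 := by
    intro r p
    rw [← Submodule.Quotient.mk_smul, Submodule.Quotient.eq]
    exact mem_iff R _
  constructor
  · intro a b hab
    simp only at hab
    have h1 : a • Submodule.Quotient.mk (p := A) (X : R[X]) =
        Submodule.Quotient.mk (b • X) := by
      rw [hab, Submodule.Quotient.mk_smul]
    have h2 := (key a (b • X)).1 h1
    rw [← sub_smul, coeff_smul, coeff_X_one, smul_eq_mul, mul_one] at h2
    exact sub_eq_zero.mp h2
  · intro q
    obtain ⟨p, rfl⟩ := Submodule.Quotient.mk_surjective _ q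
    exact ⟨p.coeff 1, (key _ p).2 (by rw [coeff_sub, coeff_smul, coeff_X_one, smul_eq_mul, mul_one, sub_self])⟩
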